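/- arXiv:2504.16370 — 3 statements merged into one kernel-verified Lean document; each statement's English description precedes it below -/
import Mathlib

section
/- Let X be any type, Φ : X → ℝ^n a function, x_1,…,x_m ∈ X, and Λ ≥ 0. Define the kernel matrix K by K_{ij} = ⟨Φ(x_i), Φ(x_j)⟩. Then the empirical Rademacher complexity of the class H = {x ↦ ⟨a, Φ(x)⟩ : a ∈ ℝ^n, ‖a‖₂ ≤ Λ}, namely ℜ̂ = 2^{−m} Σ_{σ ∈ {−1,1}^m} sup_{‖a‖₂ ≤ Λ} (1/m) Σ_{i=1}^m σ_i ⟨a, Φ(x_i)⟩, satisfies ℜ̂ ≤ Λ·√(Tr K)/m, where Tr K = Σ_{i=1}^m ‖Φ(x_i)‖₂². -/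
open scoped RealInnerProductSpace

lemma sgn_orth {m : ℕ} (i j : Fin m) (hij : i ≠ j) :
    ∑ σ : Fin m → Bool, ((if σ i then (1:ℝ) else -1) * (if σ j then (1:ℝ) else -1)) = 0 := by
  refine Finset.sum_involution (fun σ _ => Function.update σ j (!σ j)) ?_ ?_ ?_ ?_
  · intro σ _
    simp only [Function.update_of_ne hij, Function.update_self]
    cases σ i <;> cases σ j <;> norm_num
  · intro σ _ _ h
    have := congrFun h j
    simp only [Function.update_self] at this
    cases hj : σ j <;> rw [hj] at this <;> simp at this
  · intro σ _; exact Finset.mem_univ _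
  · intro σ _
    funext k
    by_cases hk : k = j
    · subst hk; simp
    · simp [Function.update_of_ne hk]

lemma sup_inner_ball {n : ℕ} (v : EuclideanSpace ℝ (Fin n)) {Λ c : ℝ} (hΛ : 0 ≤ Λ) (hc : 0 ≤ c) :
    sSup ((fun a : EuclideanSpace ℝ (Fin n) => c * ⟪a, v⟫) '' {a | ‖a‖ ≤ Λ})
      = c * (Λ * ‖v‖) := by
  apply IsGreatest.csSup_eq
  constructor
  · by_cases hv : v = 0
    · exact ⟨0, by simpa [hv] using hΛ, by simp [hv]⟩
    · have hv' : (0:ℝ) < ‖v‖ := norm_pos_iff.2 hv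
      refine ⟨(Λ / ‖v‖) • v, ?_, ?_⟩
      · simp only [Set.mem_setOf_eq, norm_smul, Real.norm_eq_abs,
          abs_of_nonneg (div_nonneg hΛ hv'.le)]
        rw [div_mul_cancel₀ _ hv'.ne']
      · simp only []
        rw [real_inner_smul_left, real_inner_self_eq_norm_sq]
        field_simp
  · rintro y ⟨a, ha, rfl⟩
    have h1 : ⟪a, v⟫ ≤ ‖a‖ * ‖v‖ := real_inner_le_norm a v
    have h2 : ‖a‖ * ‖v‖ ≤ Λ * ‖v‖ := mul_le_mul_of_nonneg_right ha (norm_nonneg v)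
    exact mul_le_mul_of_nonneg_left (h1.trans h2) hc

/-- Corollary 4 of the paper. The empirical Rademacher complexity of the class
of linear functions `x ↦ ⟨a, Φ(x)⟩` with `‖a‖₂ ≤ Λ` with respect to a sample `x_1, …, x_m` is at
most `Λ·√(Tr K)/m`, where `Tr K = ∑ᵢ ‖Φ(xᵢ)‖²` is the trace of the kernel matrix
`K_{ij} = ⟨Φ(xᵢ), Φ(x_j)⟩`. -/
theorem rademacher_linear_class_bound {X : Type*} (n m : ℕ) (hm : 1 ≤ m)
    (Φ : X → EuclideanSpace ℝ (Fin n)) (x : Fin m → X) (Λ : ℝ) (hΛ : 0 ≤ Λ) :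
    (1 / 2 ^ m : ℝ) * ∑ σ : Fin m → Bool,
        sSup ((fun a : EuclideanSpace ℝ (Fin n) =>
            (1 / (m : ℝ)) * ∑ i, (if σ i then (1 : ℝ) else -1) * ⟪a, Φ (x i)⟫) ''
          {a | ‖a‖ ≤ Λ})
      ≤ Λ * Real.sqrt (∑ i, ‖Φ (x i)‖ ^ 2) / m := by
  classical
  have hm0 : (0:ℝ) < m := by exact_mod_cast hm
  set v : (Fin m → Bool) → EuclideanSpace ℝ (Fin n) :=
    fun σ => ∑ i, (if σ i then (1:ℝ) else -1) • Φ (x i) with hv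
  set T : ℝ := ∑ i, ‖Φ (x i)‖ ^ 2 with hT
  have hT0 : 0 ≤ T := Finset.sum_nonneg fun i _ => sq_nonneg _
  -- Step 1: compute each sSup
  have hsup : ∀ σ : Fin m → Bool,
      sSup ((fun a : EuclideanSpace ℝ (Fin n) =>
          (1 / (m : ℝ)) * ∑ i, (if σ i then (1 : ℝ) else -1) * ⟪a, Φ (x i)⟫) '' {a | ‖a‖ ≤ Λ})
        = (1 / (m:ℝ)) * (Λ * ‖v σ‖) := by
    intro σ
    have key : ∀ a : EuclideanSpace ℝ (Fin n),
        (∑ i, (if σ i then (1 : ℝ) else -1) * ⟪a, Φ (x i)⟫) = ⟪a, v σ⟫ := by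
      intro a
      rw [hv]
      simp only []
      rw [inner_sum]
      exact Finset.sum_congr rfl fun i _ => by rw [real_inner_smul_right]
    have : ((fun a : EuclideanSpace ℝ (Fin n) =>
          (1 / (m : ℝ)) * ∑ i, (if σ i then (1 : ℝ) else -1) * ⟪a, Φ (x i)⟫) '' {a | ‖a‖ ≤ Λ})
        = ((fun a : EuclideanSpace ℝ (Fin n) => (1 / (m : ℝ)) * ⟪a, v σ⟫) '' {a | ‖a‖ ≤ Λ}) := by
      apply Set.image_congr
      intro a _
      rw [key]
    rw [this, sup_inner_ball (v σ) hΛ (by positivity)]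
  -- Step 2: sum of squared norms
  have hnormsq : ∑ σ : Fin m → Bool, ‖v σ‖^2 = 2^m * T := by
    have expand : ∀ σ : Fin m → Bool, ‖v σ‖^2 = ∑ i, ∑ j,
        ((if σ i then (1:ℝ) else -1) * (if σ j then (1:ℝ) else -1)) * ⟪Φ (x i), Φ (x j)⟫ := by
      intro σ
      rw [← real_inner_self_eq_norm_sq, hv]
      simp only []
      rw [sum_inner]
      refine Finset.sum_congr rfl fun i _ => ?_
      rw [real_inner_smul_left, inner_sum, Finset.mul_sum]
      refine Finset.sum_congr rfl fun j _ => ?_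
      rw [real_inner_smul_right]; ring
    simp only [expand]
    rw [Finset.sum_comm]
    have : ∀ i : Fin m, (∑ σ : Fin m → Bool, ∑ j,
        ((if σ i then (1:ℝ) else -1) * (if σ j then (1:ℝ) else -1)) * ⟪Φ (x i), Φ (x j)⟫)
        = 2^m * ‖Φ (x i)‖^2 := by
      intro i
      rw [Finset.sum_comm]
      rw [Finset.sum_eq_single i]
      · have : ∑ σ : Fin m → Bool,
            ((if σ i then (1:ℝ) else -1) * (if σ i then (1:ℝ) else -1)) * ⟪Φ (x i), Φ (x i)⟫
            = ∑ σ : Fin m → Bool, ⟪Φ (x i), Φ (x i)⟫ := by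
          refine Finset.sum_congr rfl fun σ _ => ?_
          cases σ i <;> norm_num
        rw [this, Finset.sum_const, real_inner_self_eq_norm_sq]
        simp [Fintype.card_fun]
      · intro j _ hji
        rw [← Finset.sum_mul, sgn_orth i j (Ne.symm hji), zero_mul]
      · intro h; exact absurd (Finset.mem_univ i) h
    rw [Finset.sum_congr rfl fun i _ => this i, ← Finset.mul_sum]
  -- Step 3: Cauchy-Schwarz on the sum of norms
  have hsumnorm : ∑ σ : Fin m → Bool, ‖v σ‖ ≤ 2^m * Real.sqrt T := by
    have h1 : (∑ σ : Fin m → Bool, ‖v σ‖)^2 ≤ 2^m * (2^m * T) := by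
      calc (∑ σ : Fin m → Bool, ‖v σ‖)^2
          ≤ (Finset.univ.card : ℝ) * ∑ σ : Fin m → Bool, ‖v σ‖^2 := by
            exact_mod_cast sq_sum_le_card_mul_sum_sq
              (s := (Finset.univ : Finset (Fin m → Bool))) (f := fun σ => ‖v σ‖)
        _ = 2^m * (2^m * T) := by
            rw [hnormsq, Finset.card_univ]
            norm_num [Fintype.card_fun, Fintype.card_bool, Fintype.card_fin]
    have h2 : (0:ℝ) ≤ ∑ σ : Fin m → Bool, ‖v σ‖ :=
      Finset.sum_nonneg fun _ _ => norm_nonneg _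
    have h3 : (2:ℝ)^m * Real.sqrt T = Real.sqrt (2^m * (2^m * T)) := by
      rw [show (2:ℝ)^m * (2^m * T) = ((2:ℝ)^m)^2 * T by ring, Real.sqrt_mul (by positivity),
        Real.sqrt_sq (by positivity)]
    rw [h3]
    calc ∑ σ : Fin m → Bool, ‖v σ‖ = Real.sqrt ((∑ σ : Fin m → Bool, ‖v σ‖)^2) := by
          rw [Real.sqrt_sq h2]
      _ ≤ Real.sqrt (2^m * (2^m * T)) := Real.sqrt_le_sqrt h1
  -- Assemble
  simp only [hsup]
  rw [← Finset.mul_sum, ← Finset.mul_sum]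
  have : (1 / 2 ^ m : ℝ) * ((1 / (m:ℝ)) * (Λ * ∑ σ : Fin m → Bool, ‖v σ‖))
      ≤ (1 / 2 ^ m : ℝ) * ((1 / (m:ℝ)) * (Λ * (2^m * Real.sqrt T))) := by
    gcongr
  refine le_trans this (le_of_eq ?_)
  have hm' : (m:ℝ) ≠ 0 := hm0.ne'
  field_simp
end

section
/- Let V be a finite-dimensional complex inner product space, H : V → V a self-adjoint linear operator, λ ∈ ℝ, t ∈ ℝ, and let ψ_ref, ψ ∈ V be unit vectors with Hψ_ref = λψ_ref and ⟨ψ_ref, ψ⟩ = 0. Set U = exp(−itH), ψ_± = (ψ_ref ± ψ)/√2, ψ_{±i} = (ψ_ref ± iψ)/√2, w_± = |⟨ψ_±, Uψ_+⟩|², and w_{±i} = |⟨ψ_{±i}, Uψ_+⟩|². Then ⟨ψ, Uψ⟩ = (w_+ − w_− + i(w_{+i} − w_{−i}))·e^{−iλt}; equivalently, for ρ = |ψ⟩⟨ψ| the rank-one projection onto ψ, Tr[Uρ] = (w_+ − w_− + i(w_{+i} − w_{−i}))·e^{−iλt}. -/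
open scoped ComplexInnerProductSpace

/-- If `v` is an eigenvector of `A` with eigenvalue `μ`, then `exp A v = exp μ • v`. -/
lemma exp_apply_eigenvector {V : Type*} [NormedAddCommGroup V] [InnerProductSpace ℂ V]
    [FiniteDimensional ℂ V] (A : V →L[ℂ] V) (μ : ℂ) (v : V) (h : A v = μ • v) :
    NormedSpace.exp A v = Complex.exp μ • v := by
  have hpow : ∀ n : ℕ, (A ^ n) v = μ ^ n • v := by
    intro n
    induction n with
    | zero => simp
    | succ n ih =>
      rw [pow_succ, pow_succ]
      simp [ContinuousLinearMap.mul_apply, ih, h, smul_smul, mul_comm]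
  have hsum : Summable fun n : ℕ => ((Nat.factorial n : ℂ))⁻¹ • A ^ n :=
    NormedSpace.expSeries_summable' A
  have happ : NormedSpace.exp A v = ∑' n : ℕ, (((Nat.factorial n : ℂ))⁻¹ • A ^ n) v := by
    rw [NormedSpace.exp_eq_tsum ℂ]
    exact ((ContinuousLinearMap.apply ℂ V v).map_tsum hsum).symm ▸ rfl
  rw [happ]
  have : ∀ n : ℕ, (((Nat.factorial n : ℂ))⁻¹ • A ^ n) v = (((Nat.factorial n : ℂ))⁻¹ * μ ^ n) • v := by
    intro n; simp [hpow n, smul_smul]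
  simp_rw [this]
  rw [Summable.tsum_smul_const]
  · congr 1
    rw [Complex.exp_eq_exp_ℂ, NormedSpace.exp_eq_tsum ℂ]
    simp [smul_eq_mul]
  · simpa [smul_eq_mul] using NormedSpace.expSeries_summable' (𝕂 := ℂ) μ

lemma cast_norm_sq_eq (z : ℂ) : ((‖z‖ ^ 2 : ℝ) : ℂ) = z * (starRingEnd ℂ) z := by
  rw [Complex.mul_conj, Complex.normSq_eq_norm_sq]

/-- Eq. (8) of the paper. For a self-adjoint `H`, an eigenvector `ψ_ref` with
eigenvalue `λ` orthogonal to a unit vector `ψ`, with `U = exp(-itH)`,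
`ψ_± = (ψ_ref ± ψ)/√2`, `ψ_{±i} = (ψ_ref ± iψ)/√2`, `w_± = |⟪ψ_±, Uψ_+⟫|²`,
`w_{±i} = |⟪ψ_{±i}, Uψ_+⟫|²`, one has
`⟪ψ, Uψ⟫ = (w_+ - w_- + i(w_{+i} - w_{-i}))·e^{-iλt}`; equivalently, the same formula holds for
`Tr[Uρ]` with `ρ = |ψ⟩⟨ψ|` the rank-one projection `v ↦ ⟪ψ, v⟫ • ψ`. -/
theorem feature_extractor
    {V : Type*} [NormedAddCommGroup V] [InnerProductSpace ℂ V] [FiniteDimensional ℂ V]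
    (H : V →L[ℂ] V) (hH : IsSelfAdjoint H) (lam t : ℝ)
    (ψref ψ : V) (hψref : ‖ψref‖ = 1) (hψ : ‖ψ‖ = 1)
    (heig : H ψref = (lam : ℂ) • ψref) (horth : ⟪ψref, ψ⟫ = 0)
    (U : V →L[ℂ] V) (hU : U = NormedSpace.exp ((-(t : ℂ) * Complex.I) • H))
    (ψp ψm ψpi ψmi : V)
    (hψp : ψp = ((Real.sqrt 2 : ℂ))⁻¹ • (ψref + ψ))
    (hψm : ψm = ((Real.sqrt 2 : ℂ))⁻¹ • (ψref - ψ))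
    (hψpi : ψpi = ((Real.sqrt 2 : ℂ))⁻¹ • (ψref + Complex.I • ψ))
    (hψmi : ψmi = ((Real.sqrt 2 : ℂ))⁻¹ • (ψref - Complex.I • ψ))
    (wp wm wpi wmi : ℝ)
    (hwp : wp = ‖⟪ψp, U ψp⟫‖ ^ 2) (hwm : wm = ‖⟪ψm, U ψp⟫‖ ^ 2)
    (hwpi : wpi = ‖⟪ψpi, U ψp⟫‖ ^ 2) (hwmi : wmi = ‖⟪ψmi, U ψp⟫‖ ^ 2) :
    ⟪ψ, U ψ⟫ =
        (((wp - wm : ℝ) : ℂ) + Complex.I * ((wpi - wmi : ℝ) : ℂ))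
          * Complex.exp (-(Complex.I) * (lam : ℂ) * (t : ℂ)) ∧
    LinearMap.trace ℂ V (U.toLinearMap ∘ₗ ((innerSL ℂ ψ).smulRight ψ).toLinearMap) =
        (((wp - wm : ℝ) : ℂ) + Complex.I * ((wpi - wmi : ℝ) : ℂ))
          * Complex.exp (-(Complex.I) * (lam : ℂ) * (t : ℂ)) := by
  set e : ℂ := Complex.exp (-(Complex.I) * (lam : ℂ) * (t : ℂ)) with he_def
  set d : ℂ := ⟪ψ, U ψ⟫ with hd_def
  -- U ψref = e • ψref
  have hUref : U ψref = e • ψref := by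
    rw [hU, exp_apply_eigenvector _ ((-(t : ℂ) * Complex.I) * (lam : ℂ)) ψref
      (by rw [ContinuousLinearMap.smul_apply, heig, smul_smul])]
    congr 2
    ring
  -- conj e
  have hce : (starRingEnd ℂ) e = Complex.exp (Complex.I * (lam : ℂ) * (t : ℂ)) := by
    rw [he_def, ← Complex.exp_conj]
    congr 1
    simp [map_mul, Complex.conj_I]
  have hee : e * (starRingEnd ℂ) e = 1 := by
    rw [hce, he_def, ← Complex.exp_add]
    simp [← Complex.exp_zero]
  -- ⟪ψref, U ψ⟫ = 0
  have hadj : ContinuousLinearMap.adjoint U ψref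
      = Complex.exp ((t : ℂ) * Complex.I * (lam : ℂ)) • ψref := by
    have hstar : star U = NormedSpace.exp (((t : ℂ) * Complex.I) • H) := by
      rw [hU, NormedSpace.star_exp, star_smul, hH.star_eq]
      congr 1
      simp only [Complex.star_def, map_mul, map_neg, Complex.conj_I, Complex.conj_ofReal]
      ring
    rw [← ContinuousLinearMap.star_eq_adjoint, hstar,
      exp_apply_eigenvector _ (((t : ℂ) * Complex.I) * (lam : ℂ)) ψref
        (by rw [ContinuousLinearMap.smul_apply, heig, smul_smul])]
  have hb : ⟪ψref, U ψ⟫ = 0 := by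
    rw [← ContinuousLinearMap.adjoint_inner_left, hadj, inner_smul_left, horth, mul_zero]
  have horth' : ⟪ψ, ψref⟫ = 0 := by
    rw [← inner_conj_symm, horth, map_zero]
  have h11 : ⟪ψref, ψref⟫ = (1 : ℂ) := by
    rw [inner_self_eq_norm_sq_to_K, hψref]; norm_num
  -- the scalar
  have hs2 : ((Real.sqrt 2 : ℂ))⁻¹ * (starRingEnd ℂ) ((Real.sqrt 2 : ℂ))⁻¹ = (2 : ℂ)⁻¹ := by
    rw [map_inv₀, Complex.conj_ofReal, ← mul_inv, ← Complex.ofReal_mul,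
      Real.mul_self_sqrt (by norm_num)]
    norm_num
  -- the four inner products
  have hA : ⟪ψp, U ψp⟫ = (2 : ℂ)⁻¹ * (e + d) := by
    rw [hψp]
    simp only [map_smul, map_add, inner_smul_left, inner_smul_right, inner_add_left,
      inner_add_right, hUref, hb, horth, horth', h11, hd_def]
    rw [map_inv₀, Complex.conj_ofReal]
    have h2 : ((Real.sqrt 2 : ℂ))⁻¹ * ((Real.sqrt 2 : ℂ))⁻¹ = (2 : ℂ)⁻¹ := by
      rw [← mul_inv, ← Complex.ofReal_mul, Real.mul_self_sqrt (by norm_num)]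
      norm_num
    linear_combination (e + ⟪ψ, U ψ⟫) * h2
  have hB : ⟪ψm, U ψp⟫ = (2 : ℂ)⁻¹ * (e - d) := by
    rw [hψm, hψp]
    simp only [map_smul, map_add, inner_smul_left, inner_smul_right, inner_add_left,
      inner_add_right, inner_sub_left, hUref, hb, horth, horth', h11, hd_def]
    rw [map_inv₀, Complex.conj_ofReal]
    have h2 : ((Real.sqrt 2 : ℂ))⁻¹ * ((Real.sqrt 2 : ℂ))⁻¹ = (2 : ℂ)⁻¹ := by
      rw [← mul_inv, ← Complex.ofReal_mul, Real.mul_self_sqrt (by norm_num)]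
      norm_num
    linear_combination (e - ⟪ψ, U ψ⟫) * h2
  have hC : ⟪ψpi, U ψp⟫ = (2 : ℂ)⁻¹ * (e - Complex.I * d) := by
    rw [hψpi, hψp]
    simp only [map_smul, map_add, inner_smul_left, inner_smul_right, inner_add_left,
      inner_add_right, hUref, hb, horth, horth', h11, hd_def, Complex.conj_I]
    rw [map_inv₀, Complex.conj_ofReal]
    have h2 : ((Real.sqrt 2 : ℂ))⁻¹ * ((Real.sqrt 2 : ℂ))⁻¹ = (2 : ℂ)⁻¹ := by
      rw [← mul_inv, ← Complex.ofReal_mul, Real.mul_self_sqrt (by norm_num)]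
      norm_num
    linear_combination (e - Complex.I * ⟪ψ, U ψ⟫) * h2
  have hD : ⟪ψmi, U ψp⟫ = (2 : ℂ)⁻¹ * (e + Complex.I * d) := by
    rw [hψmi, hψp]
    simp only [map_smul, map_add, inner_smul_left, inner_smul_right, inner_add_left,
      inner_add_right, inner_sub_left, hUref, hb, horth, horth', h11, hd_def, Complex.conj_I]
    rw [map_inv₀, Complex.conj_ofReal]
    have h2 : ((Real.sqrt 2 : ℂ))⁻¹ * ((Real.sqrt 2 : ℂ))⁻¹ = (2 : ℂ)⁻¹ := by
      rw [← mul_inv, ← Complex.ofReal_mul, Real.mul_self_sqrt (by norm_num)]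
      norm_num
    linear_combination (e + Complex.I * ⟪ψ, U ψ⟫) * h2
  have main : d = (((wp - wm : ℝ) : ℂ) + Complex.I * ((wpi - wmi : ℝ) : ℂ)) * e := by
    have hwp' : ((wp : ℝ) : ℂ) = ⟪ψp, U ψp⟫ * (starRingEnd ℂ) ⟪ψp, U ψp⟫ := by
      rw [hwp, cast_norm_sq_eq]
    have hwm' : ((wm : ℝ) : ℂ) = ⟪ψm, U ψp⟫ * (starRingEnd ℂ) ⟪ψm, U ψp⟫ := by
      rw [hwm, cast_norm_sq_eq]
    have hwpi' : ((wpi : ℝ) : ℂ) = ⟪ψpi, U ψp⟫ * (starRingEnd ℂ) ⟪ψpi, U ψp⟫ := by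
      rw [hwpi, cast_norm_sq_eq]
    have hwmi' : ((wmi : ℝ) : ℂ) = ⟪ψmi, U ψp⟫ * (starRingEnd ℂ) ⟪ψmi, U ψp⟫ := by
      rw [hwmi, cast_norm_sq_eq]
    push_cast
    rw [hwp', hwm', hwpi', hwmi', hA, hB, hC, hD]
    simp only [map_mul, map_inv₀, map_add, map_sub, Complex.conj_I,
      Complex.conj_ofNat]
    have hI : Complex.I * Complex.I = -1 := Complex.I_mul_I
    linear_combination ((Complex.I * Complex.I - 1) / 2 * d) * hee
      + ((d - e ^ 2 * (starRingEnd ℂ) d) / 2) * hI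
  constructor
  · exact main
  · have htr : LinearMap.trace ℂ V (U.toLinearMap ∘ₗ ((innerSL ℂ ψ).smulRight ψ).toLinearMap)
        = ⟪ψ, U ψ⟫ := by
      have heq : U.toLinearMap ∘ₗ ((innerSL ℂ ψ).smulRight ψ).toLinearMap
          = dualTensorHom ℂ V V ((innerSL ℂ ψ).toLinearMap ⊗ₜ[ℂ] (U ψ)) := by
        ext v
        simp [dualTensorHom_apply]
      rw [heq, LinearMap.trace_eq_contract_apply]
      simp [contractLeft_apply]
    rw [htr, ← hd_def, main]
end

section
/- Let V be a finite-dimensional complex inner product space, H : V → V a self-adjoint linear operator, λ ∈ ℝ, t ∈ ℝ, and let ψ_ref, ψ ∈ V be unit vectors with Hψ_ref = λψ_ref and ⟨ψ_ref, ψ⟩ = 0. Set U = exp(−itH), ψ_± = (ψ_ref ± ψ)/√2, ψ_{±i} = (ψ_ref ± iψ)/√2, w_± = |⟨ψ_±, Uψ_+⟩|², w_{±i} = |⟨ψ_{±i}, Uψ_+⟩|², and a = ⟨ψ, Uψ⟩. Then w_+ − w_− = Re(e^{iλt}·a) and w_{+i} − w_{−i} = Im(e^{iλt}·a). -/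
open scoped ComplexInnerProductSpace

lemma aux_pow_eig {V : Type*} [NormedAddCommGroup V] [InnerProductSpace ℂ V]
    (A : V →L[ℂ] V) (μ : ℂ) (x : V) (h : A x = μ • x) (n : ℕ) :
    (A ^ n) x = μ ^ n • x := by
  induction n with
  | zero => simp
  | succ n ih =>
    rw [pow_succ, ContinuousLinearMap.mul_apply, h, map_smul, ih, smul_smul, pow_succ, mul_comm]

lemma aux_exp_eig {V : Type*} [NormedAddCommGroup V] [InnerProductSpace ℂ V]
    [FiniteDimensional ℂ V]
    (A : V →L[ℂ] V) (μ : ℂ) (x : V) (h : A x = μ • x) :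
    NormedSpace.exp A x = Complex.exp μ • x := by
  have hs : Summable (fun n : ℕ => ((n.factorial : ℂ))⁻¹ • A ^ n) := NormedSpace.expSeries_summable' A
  have hs2 : Summable (fun n : ℕ => ((n.factorial : ℂ))⁻¹ * μ ^ n) := by
    simpa [smul_eq_mul] using NormedSpace.expSeries_summable' (𝕂 := ℂ) μ
  have h1 : NormedSpace.exp A x = ∑' n : ℕ, (((n.factorial : ℂ))⁻¹ • A ^ n) x := by
    rw [NormedSpace.exp_eq_tsum ℂ]
    exact ((ContinuousLinearMap.apply ℂ V x).map_tsum hs)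
  rw [h1]
  have h2 : ∀ n : ℕ, (((n.factorial : ℂ))⁻¹ • A ^ n) x = (((n.factorial : ℂ))⁻¹ * μ ^ n) • x := by
    intro n
    rw [ContinuousLinearMap.smul_apply, aux_pow_eig A μ x h n, smul_smul]
  rw [tsum_congr h2, hs2.tsum_smul_const]
  congr 1
  rw [Complex.exp_eq_exp_ℂ, NormedSpace.exp_eq_tsum ℂ]
  simp [smul_eq_mul]

/-- In the setting of the feature-extraction identity, with
`a = ⟪ψ, Uψ⟫`, the measured probabilities satisfy `w_+ - w_- = Re(e^{iλt}·a)` and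
`w_{+i} - w_{-i} = Im(e^{iλt}·a)`. -/
theorem measured_probabilities_re_im
    {V : Type*} [NormedAddCommGroup V] [InnerProductSpace ℂ V] [FiniteDimensional ℂ V]
    (H : V →L[ℂ] V) (hH : IsSelfAdjoint H) (lam t : ℝ)
    (ψref ψ : V) (hψref : ‖ψref‖ = 1) (hψ : ‖ψ‖ = 1)
    (heig : H ψref = (lam : ℂ) • ψref) (horth : ⟪ψref, ψ⟫ = 0)
    (U : V →L[ℂ] V) (hU : U = NormedSpace.exp ((-(t : ℂ) * Complex.I) • H))
    (ψp ψm ψpi ψmi : V)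
    (hψp : ψp = ((Real.sqrt 2 : ℂ))⁻¹ • (ψref + ψ))
    (hψm : ψm = ((Real.sqrt 2 : ℂ))⁻¹ • (ψref - ψ))
    (hψpi : ψpi = ((Real.sqrt 2 : ℂ))⁻¹ • (ψref + Complex.I • ψ))
    (hψmi : ψmi = ((Real.sqrt 2 : ℂ))⁻¹ • (ψref - Complex.I • ψ))
    (wp wm wpi wmi : ℝ)
    (hwp : wp = ‖⟪ψp, U ψp⟫‖ ^ 2) (hwm : wm = ‖⟪ψm, U ψp⟫‖ ^ 2)
    (hwpi : wpi = ‖⟪ψpi, U ψp⟫‖ ^ 2) (hwmi : wmi = ‖⟪ψmi, U ψp⟫‖ ^ 2)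
    (a : ℂ) (ha : a = ⟪ψ, U ψ⟫) :
    wp - wm = (Complex.exp (Complex.I * (lam : ℂ) * (t : ℂ)) * a).re ∧
    wpi - wmi = (Complex.exp (Complex.I * (lam : ℂ) * (t : ℂ)) * a).im := by
  set c : ℂ := Complex.exp (-(t : ℂ) * Complex.I * lam) with hc
  -- eigenvector facts
  have heig1 : ((-(t : ℂ) * Complex.I) • H) ψref = (-(t : ℂ) * Complex.I * lam) • ψref := by
    rw [ContinuousLinearMap.smul_apply, heig, smul_smul]
  have h1 : U ψref = c • ψref := by
    rw [hU]; exact aux_exp_eig _ _ _ heig1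
  -- adjoint of U
  have hadj : ContinuousLinearMap.adjoint U ψref
      = Complex.exp ((t : ℂ) * Complex.I * lam) • ψref := by
    have : ContinuousLinearMap.adjoint U
        = NormedSpace.exp (((t : ℂ) * Complex.I) • H) := by
      rw [hU, ← ContinuousLinearMap.star_eq_adjoint, NormedSpace.star_exp, star_smul,
        hH.star_eq]
      congr 1
      simp [RCLike.star_def, map_mul, Complex.conj_I]
    rw [this]
    refine aux_exp_eig _ _ _ ?_
    rw [ContinuousLinearMap.smul_apply, heig, smul_smul]
  have h3 : ⟪ψref, U ψ⟫ = 0 := by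
    rw [← ContinuousLinearMap.adjoint_inner_left, hadj, inner_smul_left, horth, mul_zero]
  have h4 : ⟪ψ, U ψref⟫ = 0 := by
    rw [h1, inner_smul_right, inner_eq_zero_symm.mp horth, mul_zero]
  have hself : ⟪ψref, ψref⟫ = 1 := by
    rw [inner_self_eq_norm_sq_to_K, hψref]; norm_num
  have hsq : ((Real.sqrt 2 : ℂ))⁻¹ * ((Real.sqrt 2 : ℂ))⁻¹ = (2 : ℂ)⁻¹ := by
    rw [← mul_inv, ← Complex.ofReal_mul, Real.mul_self_sqrt (by norm_num)]
    norm_num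
  have hconjs : (starRingEnd ℂ) ((Real.sqrt 2 : ℂ))⁻¹ = ((Real.sqrt 2 : ℂ))⁻¹ := by
    simp
  -- expand U ψp
  have hUp : U ψp = ((Real.sqrt 2 : ℂ))⁻¹ • (c • ψref + U ψ) := by
    rw [hψp, map_smul, map_add, h1]
  have key : ∀ s : ℂ, ⟪((Real.sqrt 2 : ℂ))⁻¹ • (ψref + s • ψ), U ψp⟫
      = (2 : ℂ)⁻¹ * (c + (starRingEnd ℂ) s * a) := by
    intro s
    rw [hUp, inner_smul_left, inner_smul_right, hconjs, ← mul_assoc, hsq]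
    congr 1
    simp only [inner_add_left, inner_add_right, inner_smul_left, inner_smul_right, hself,
      inner_eq_zero_symm.mp horth, h3, h4, ← ha, mul_zero, mul_one, add_zero, zero_add]
  have hp : ⟪ψp, U ψp⟫ = (2 : ℂ)⁻¹ * (c + a) := by
    have h := key 1
    rw [map_one, one_mul, one_smul] at h
    nth_rewrite 1 [hψp]
    exact h
  have hm : ⟪ψm, U ψp⟫ = (2 : ℂ)⁻¹ * (c - a) := by
    have h := key (-1)
    rw [map_neg, map_one] at h
    nth_rewrite 1 [hψm]
    rw [sub_eq_add_neg, ← neg_one_smul ℂ ψ, h]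
    ring
  have hpi : ⟪ψpi, U ψp⟫ = (2 : ℂ)⁻¹ * (c - Complex.I * a) := by
    have h := key Complex.I
    rw [Complex.conj_I] at h
    nth_rewrite 1 [hψpi]
    rw [h]
    ring
  have hmi : ⟪ψmi, U ψp⟫ = (2 : ℂ)⁻¹ * (c + Complex.I * a) := by
    have h := key (-Complex.I)
    rw [map_neg, Complex.conj_I, neg_neg] at h
    nth_rewrite 1 [hψmi]
    rw [sub_eq_add_neg, ← neg_smul, h]
  -- e^{iλt} = conj c
  have hcc : Complex.exp (Complex.I * (lam : ℂ) * (t : ℂ)) = (starRingEnd ℂ) c := by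
    rw [hc, ← Complex.exp_conj]
    congr 1
    simp [map_mul, Complex.conj_I]
    ring
  have hnorm : ∀ z : ℂ, ‖z‖ ^ 2 = z.re ^ 2 + z.im ^ 2 := by
    intro z
    rw [Complex.sq_norm, Complex.normSq_apply]
    ring
  constructor
  · rw [hwp, hwm, hp, hm, hcc, hnorm, hnorm]
    simp [Complex.mul_re, Complex.mul_im, Complex.add_re, Complex.add_im, Complex.sub_re,
      Complex.sub_im, Complex.conj_re, Complex.conj_im]
    ring
  · rw [hwpi, hwmi, hpi, hmi, hcc, hnorm, hnorm]
    simp [Complex.mul_re, Complex.mul_im, Complex.add_re, Complex.add_im, Complex.sub_re,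
      Complex.sub_im, Complex.conj_re, Complex.conj_im, Complex.I_re, Complex.I_im]
    ring
end
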